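/- Let H be a Hopf algebra, A an algebra, φ : H ⊗ A → A and ω : H ⊗ H → A, with ψ and σ defined as ψ(h ⊗ a) = Σ φ(h₍₁₎ ⊗ a) ⊗ h₍₂₎ and σ(h ⊗ g) = Σ ω(h₍₁₎ ⊗ g₍₁₎) ⊗ h₍₂₎g₍₂₎. Then the partial cocycle condition Σ φ(h₍₁₎ ⊗ ω(g₍₁₎ ⊗ l₍₁₎)) ω(h₍₂₎ ⊗ g₍₂₎l₍₂₎) = Σ ω(h₍₁₎ ⊗ g₍₁₎) ω(h₍₂₎g₍₂₎ ⊗ l) holds for all h, g, l ∈ H if and only if the cocycle condition (μ_A ⊗ H) ∘ (A ⊗ σ) ∘ (σ ⊗ H) = (μ_A ⊗ H) ∘ (A ⊗ σ) ∘ (ψ ⊗ H) ∘ (H ⊗ σ) holds. -/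
import Mathlib


open TensorProduct

variable {R A V H : Type*} [CommRing R] [Ring A] [Algebra R A]
  [AddCommGroup V] [Module R V] [Ring H] [HopfAlgebra R H]

/-- (μ_A ⊗ V) ∘ (A ⊗ ψ) ∘ (ψ ⊗ A) : (V ⊗ A) ⊗ A → A ⊗ V -/
noncomputable def psiMulLHS (ψ : V ⊗[R] A →ₗ[R] A ⊗[R] V) :
    (V ⊗[R] A) ⊗[R] A →ₗ[R] A ⊗[R] V :=
  TensorProduct.map (LinearMap.mul' R A) LinearMap.id
    ∘ₗ (TensorProduct.assoc R A A V).symm.toLinearMap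
    ∘ₗ LinearMap.lTensor A ψ
    ∘ₗ (TensorProduct.assoc R A V A).toLinearMap
    ∘ₗ LinearMap.rTensor A ψ

/-- ψ ∘ (V ⊗ μ_A) : (V ⊗ A) ⊗ A → A ⊗ V -/
noncomputable def psiMulRHS (ψ : V ⊗[R] A →ₗ[R] A ⊗[R] V) :
    (V ⊗[R] A) ⊗[R] A →ₗ[R] A ⊗[R] V :=
  ψ ∘ₗ LinearMap.lTensor V (LinearMap.mul' R A)
    ∘ₗ (TensorProduct.assoc R V A A).toLinearMap

/-- ∇ = (μ_A ⊗ V) ∘ (A ⊗ ψ) ∘ (A ⊗ V ⊗ η_A) : A ⊗ V → A ⊗ V -/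
noncomputable def nabla (ψ : V ⊗[R] A →ₗ[R] A ⊗[R] V) :
    A ⊗[R] V →ₗ[R] A ⊗[R] V :=
  TensorProduct.map (LinearMap.mul' R A) LinearMap.id
    ∘ₗ (TensorProduct.assoc R A A V).symm.toLinearMap
    ∘ₗ LinearMap.lTensor A ψ
    ∘ₗ LinearMap.lTensor A ((TensorProduct.mk R V A).flip 1)

/-- ψ(h ⊗ a) = Σ φ(h₍₁₎ ⊗ a) ⊗ h₍₂₎. -/
noncomputable def psiOf (φ : H ⊗[R] A →ₗ[R] A) : H ⊗[R] A →ₗ[R] A ⊗[R] H :=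
  LinearMap.rTensor H φ
    ∘ₗ (TensorProduct.assoc R H A H).symm.toLinearMap
    ∘ₗ LinearMap.lTensor H (TensorProduct.comm R H A).toLinearMap
    ∘ₗ (TensorProduct.assoc R H H A).toLinearMap
    ∘ₗ LinearMap.rTensor A (Coalgebra.comul : H →ₗ[R] H ⊗[R] H)

/-- σ(h ⊗ g) = Σ ω(h₍₁₎ ⊗ g₍₁₎) ⊗ h₍₂₎g₍₂₎. -/
noncomputable def sigmaOf (ω : H ⊗[R] H →ₗ[R] A) : H ⊗[R] H →ₗ[R] A ⊗[R] H :=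
  TensorProduct.map ω (LinearMap.mul' R H)
    ∘ₗ (TensorProduct.tensorTensorTensorComm R H H H H).toLinearMap
    ∘ₗ TensorProduct.map (Coalgebra.comul : H →ₗ[R] H ⊗[R] H)
        (Coalgebra.comul : H →ₗ[R] H ⊗[R] H)

/-- Condition (ii) of a twisted partial action:
φ(h ⊗ ab) = Σ φ(h₍₁₎ ⊗ a) φ(h₍₂₎ ⊗ b), as maps H ⊗ (A ⊗ A) → A. -/
def IsPartiallyMultiplicative (φ : H ⊗[R] A →ₗ[R] A) : Prop :=
  φ ∘ₗ LinearMap.lTensor H (LinearMap.mul' R A) =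
    LinearMap.mul' R A ∘ₗ TensorProduct.map φ φ
      ∘ₗ (TensorProduct.tensorTensorTensorComm R H H A A).toLinearMap
      ∘ₗ LinearMap.rTensor (A ⊗[R] A) (Coalgebra.comul : H →ₗ[R] H ⊗[R] H)

/-- Twisted condition LHS: (μ_A ⊗ V) ∘ (A ⊗ ψ) ∘ (σ ⊗ A) : (V ⊗ V) ⊗ A → A ⊗ V. -/
noncomputable def twistedLHS (ψ : V ⊗[R] A →ₗ[R] A ⊗[R] V)
    (σ : V ⊗[R] V →ₗ[R] A ⊗[R] V) : (V ⊗[R] V) ⊗[R] A →ₗ[R] A ⊗[R] V :=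
  TensorProduct.map (LinearMap.mul' R A) LinearMap.id
    ∘ₗ (TensorProduct.assoc R A A V).symm.toLinearMap
    ∘ₗ LinearMap.lTensor A ψ
    ∘ₗ (TensorProduct.assoc R A V A).toLinearMap
    ∘ₗ LinearMap.rTensor A σ

/-- Twisted condition RHS: (μ_A ⊗ V) ∘ (A ⊗ σ) ∘ (ψ ⊗ V) ∘ (V ⊗ ψ) : V ⊗ (V ⊗ A) → A ⊗ V. -/
noncomputable def twistedRHS (ψ : V ⊗[R] A →ₗ[R] A ⊗[R] V)
    (σ : V ⊗[R] V →ₗ[R] A ⊗[R] V) : V ⊗[R] (V ⊗[R] A) →ₗ[R] A ⊗[R] V :=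
  TensorProduct.map (LinearMap.mul' R A) LinearMap.id
    ∘ₗ (TensorProduct.assoc R A A V).symm.toLinearMap
    ∘ₗ LinearMap.lTensor A σ
    ∘ₗ (TensorProduct.assoc R A V V).toLinearMap
    ∘ₗ LinearMap.rTensor V ψ
    ∘ₗ (TensorProduct.assoc R V A V).symm.toLinearMap
    ∘ₗ LinearMap.lTensor V ψ

/-- Cocycle condition LHS: (μ_A ⊗ V) ∘ (A ⊗ σ) ∘ (σ ⊗ V) : (V ⊗ V) ⊗ V → A ⊗ V. -/
noncomputable def cocycleLHS (σ : V ⊗[R] V →ₗ[R] A ⊗[R] V) :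
    (V ⊗[R] V) ⊗[R] V →ₗ[R] A ⊗[R] V :=
  TensorProduct.map (LinearMap.mul' R A) LinearMap.id
    ∘ₗ (TensorProduct.assoc R A A V).symm.toLinearMap
    ∘ₗ LinearMap.lTensor A σ
    ∘ₗ (TensorProduct.assoc R A V V).toLinearMap
    ∘ₗ LinearMap.rTensor V σ

/-- Cocycle condition RHS: (μ_A ⊗ V) ∘ (A ⊗ σ) ∘ (ψ ⊗ V) ∘ (V ⊗ σ) : V ⊗ (V ⊗ V) → A ⊗ V. -/
noncomputable def cocycleRHS (ψ : V ⊗[R] A →ₗ[R] A ⊗[R] V)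
    (σ : V ⊗[R] V →ₗ[R] A ⊗[R] V) : V ⊗[R] (V ⊗[R] V) →ₗ[R] A ⊗[R] V :=
  TensorProduct.map (LinearMap.mul' R A) LinearMap.id
    ∘ₗ (TensorProduct.assoc R A A V).symm.toLinearMap
    ∘ₗ LinearMap.lTensor A σ
    ∘ₗ (TensorProduct.assoc R A V V).toLinearMap
    ∘ₗ LinearMap.rTensor V ψ
    ∘ₗ (TensorProduct.assoc R V A V).symm.toLinearMap
    ∘ₗ LinearMap.lTensor V σ

/-- Auxiliary map V ⊗ (A ⊗ V) → A ⊗ V used in the weak crossed product. -/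
noncomputable def wcpAux (ψ : V ⊗[R] A →ₗ[R] A ⊗[R] V)
    (σ : V ⊗[R] V →ₗ[R] A ⊗[R] V) : V ⊗[R] (A ⊗[R] V) →ₗ[R] A ⊗[R] V :=
  TensorProduct.map (LinearMap.mul' R A) LinearMap.id
    ∘ₗ (TensorProduct.assoc R A A V).symm.toLinearMap
    ∘ₗ LinearMap.lTensor A σ
    ∘ₗ (TensorProduct.assoc R A V V).toLinearMap
    ∘ₗ LinearMap.rTensor V ψ
    ∘ₗ (TensorProduct.assoc R V A V).symm.toLinearMap

/-- The weak crossed product multiplication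
μ_{A⊗V} = (μ_A ⊗ V) ∘ (μ_A ⊗ σ) ∘ (A ⊗ ψ ⊗ V) on A ⊗ V. -/
noncomputable def wcpMul (ψ : V ⊗[R] A →ₗ[R] A ⊗[R] V)
    (σ : V ⊗[R] V →ₗ[R] A ⊗[R] V) :
    (A ⊗[R] V) ⊗[R] (A ⊗[R] V) →ₗ[R] A ⊗[R] V :=
  TensorProduct.map (LinearMap.mul' R A) LinearMap.id
    ∘ₗ (TensorProduct.assoc R A A V).symm.toLinearMap
    ∘ₗ LinearMap.lTensor A (wcpAux ψ σ)
    ∘ₗ (TensorProduct.assoc R A V (A ⊗[R] V)).toLinearMap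

/-- Partial twisted condition LHS: μ_A ∘ (A ⊗ ω) ∘ (ψ ⊗ H) ∘ (H ⊗ ψ),
i.e. (h ⊗ g ⊗ a) ↦ Σ φ(h₍₁₎ ⊗ φ(g₍₁₎ ⊗ a)) ω(h₍₂₎ ⊗ g₍₂₎). -/
noncomputable def partialTwistedLHS (φ : H ⊗[R] A →ₗ[R] A)
    (ω : H ⊗[R] H →ₗ[R] A) : H ⊗[R] (H ⊗[R] A) →ₗ[R] A :=
  LinearMap.mul' R A
    ∘ₗ LinearMap.lTensor A ω
    ∘ₗ (TensorProduct.assoc R A H H).toLinearMap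
    ∘ₗ LinearMap.rTensor H (psiOf φ)
    ∘ₗ (TensorProduct.assoc R H A H).symm.toLinearMap
    ∘ₗ LinearMap.lTensor H (psiOf φ)

/-- Partial twisted condition RHS: μ_A ∘ (A ⊗ φ) ∘ (σ ⊗ A),
i.e. (h ⊗ g ⊗ a) ↦ Σ ω(h₍₁₎ ⊗ g₍₁₎) φ(h₍₂₎g₍₂₎ ⊗ a). -/
noncomputable def partialTwistedRHS (φ : H ⊗[R] A →ₗ[R] A)
    (ω : H ⊗[R] H →ₗ[R] A) : (H ⊗[R] H) ⊗[R] A →ₗ[R] A :=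
  LinearMap.mul' R A
    ∘ₗ LinearMap.lTensor A φ
    ∘ₗ (TensorProduct.assoc R A H A).toLinearMap
    ∘ₗ LinearMap.rTensor A (sigmaOf ω)

/-- Partial cocycle condition LHS:
(h ⊗ g ⊗ l) ↦ Σ φ(h₍₁₎ ⊗ ω(g₍₁₎ ⊗ l₍₁₎)) ω(h₍₂₎ ⊗ g₍₂₎l₍₂₎),
i.e. μ_A ∘ (A ⊗ ω) ∘ (ψ ⊗ H) ∘ (H ⊗ σ). -/
noncomputable def partialCocycleLHS (φ : H ⊗[R] A →ₗ[R] A)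
    (ω : H ⊗[R] H →ₗ[R] A) : H ⊗[R] (H ⊗[R] H) →ₗ[R] A :=
  LinearMap.mul' R A
    ∘ₗ LinearMap.lTensor A ω
    ∘ₗ (TensorProduct.assoc R A H H).toLinearMap
    ∘ₗ LinearMap.rTensor H (psiOf φ)
    ∘ₗ (TensorProduct.assoc R H A H).symm.toLinearMap
    ∘ₗ LinearMap.lTensor H (sigmaOf ω)

/-- Partial cocycle condition RHS:
(h ⊗ g ⊗ l) ↦ Σ ω(h₍₁₎ ⊗ g₍₁₎) ω(h₍₂₎g₍₂₎ ⊗ l), i.e. μ_A ∘ (A ⊗ ω) ∘ (σ ⊗ H). -/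
noncomputable def partialCocycleRHS (ω : H ⊗[R] H →ₗ[R] A) :
    (H ⊗[R] H) ⊗[R] H →ₗ[R] A :=
  LinearMap.mul' R A
    ∘ₗ LinearMap.lTensor A ω
    ∘ₗ (TensorProduct.assoc R A H H).toLinearMap
    ∘ₗ LinearMap.rTensor H (sigmaOf ω)


lemma sum_comm₃ {M α β γ : Type*} [AddCommMonoid M]
    (s : Finset α) (t : Finset β) (u : Finset γ) (f : α → β → γ → M) :
    ∑ a ∈ s, ∑ b ∈ t, ∑ c ∈ u, f a b c = ∑ c ∈ u, ∑ b ∈ t, ∑ a ∈ s, f a b c :=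
  (Finset.sum_congr rfl fun _ _ => Finset.sum_comm).trans <|
    Finset.sum_comm.trans <| Finset.sum_congr rfl fun _ _ => Finset.sum_comm

lemma sum_five {M α β γ : Type*} {α' : α → Type*} {β' : β → Type*} [AddCommMonoid M]
    (s : Finset α) (t : Finset β) (u : Finset γ)
    (s' : (a : α) → Finset (α' a)) (t' : (b : β) → Finset (β' b))
    (f : (a : α) → (b : β) → α' a → β' b → γ → M) :
    ∑ a ∈ s, ∑ b ∈ t, ∑ x ∈ s' a, ∑ y ∈ t' b, ∑ c ∈ u, f a b x y c
      = ∑ c ∈ u, ∑ b ∈ t, ∑ y ∈ t' b, ∑ a ∈ s, ∑ x ∈ s' a, f a b x y c := by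
  refine (Finset.sum_congr rfl fun a _ => Finset.sum_comm).trans ?_            -- a x b y c
  refine (Finset.sum_congr rfl fun a _ => Finset.sum_congr rfl fun x _ =>
    Finset.sum_congr rfl fun b _ => Finset.sum_comm).trans ?_                  -- a x b c y
  refine (Finset.sum_congr rfl fun a _ => Finset.sum_congr rfl fun x _ =>
    Finset.sum_comm).trans ?_                                                  -- a x c b y
  refine (Finset.sum_congr rfl fun a _ => Finset.sum_comm).trans ?_            -- a c x b y
  refine Finset.sum_comm.trans ?_                                              -- c a x b y
  refine (Finset.sum_congr rfl fun c _ => Finset.sum_congr rfl fun a _ =>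
    Finset.sum_comm).trans ?_                                                  -- c a b x y
  refine (Finset.sum_congr rfl fun c _ => Finset.sum_congr rfl fun a _ =>
    Finset.sum_congr rfl fun b _ => Finset.sum_comm).trans ?_                  -- c a b y x
  refine (Finset.sum_congr rfl fun c _ => Finset.sum_comm).trans ?_            -- c b a y x
  exact Finset.sum_congr rfl fun c _ => Finset.sum_congr rfl fun b _ =>
    Finset.sum_comm                                                            -- c b y a x

section SumSix
variable {M α β γ : Type*} {α' : α → Type*} {β' : β → Type*} {γ' : γ → Type*}
  [AddCommMonoid M]

abbrev c1 {s : Finset α} {f g : α → M} (h : ∀ a ∈ s, f a = g a) :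
    ∑ a ∈ s, f a = ∑ a ∈ s, g a := Finset.sum_congr rfl h

lemma sum_six (s : Finset α) (t : Finset β) (u : Finset γ)
    (s' : (a : α) → Finset (α' a)) (t' : (b : β) → Finset (β' b))
    (u' : (c : γ) → Finset (γ' c))
    (f : (a : α) → (b : β) → (c : γ) → α' a → β' b → γ' c → M) :
    ∑ b ∈ t, ∑ c ∈ u, ∑ a ∈ s, ∑ x ∈ s' a, ∑ y ∈ t' b, ∑ z ∈ u' c, f a b c x y z
      = ∑ c ∈ u, ∑ z ∈ u' c, ∑ b ∈ t, ∑ y ∈ t' b, ∑ a ∈ s, ∑ x ∈ s' a,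
          f a b c x y z := by
  refine (c1 fun b _ => c1 fun c _ => c1 fun a _ => Finset.sum_comm).trans ?_
    -- b c a y x z
  refine (c1 fun b _ => c1 fun c _ => Finset.sum_comm).trans ?_
    -- b c y a x z
  refine (c1 fun b _ => Finset.sum_comm).trans ?_
    -- b y c a x z
  refine (c1 fun b _ => c1 fun y _ => c1 fun c _ => c1 fun a _ =>
    Finset.sum_comm).trans ?_
    -- b y c a z x
  refine (c1 fun b _ => c1 fun y _ => c1 fun c _ => Finset.sum_comm).trans ?_
    -- b y c z a x
  refine (c1 fun b _ => Finset.sum_comm).trans ?_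
    -- b c y z a x
  refine Finset.sum_comm.trans ?_
    -- c b y z a x
  refine (c1 fun c _ => c1 fun b _ => Finset.sum_comm).trans ?_
    -- c b z y a x
  exact c1 fun c _ => Finset.sum_comm
    -- c z b y a x
end SumSix
/-! ### Auxiliary machinery for the proof -/

open Coalgebra in
lemma comul_repr' (a : H) : Coalgebra.comul (R := R) a
    = ∑ i ∈ (ℛ R a).index, (ℛ R a).left i ⊗ₜ[R] (ℛ R a).right i := (ℛ R a).eq.symm

open Coalgebra in
lemma sigma_tmul (ω : H ⊗[R] H →ₗ[R] A) (x y : H) :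
    sigmaOf ω (x ⊗ₜ y) = ∑ i ∈ (ℛ R x).index, ∑ j ∈ (ℛ R y).index,
      ω ((ℛ R x).left i ⊗ₜ (ℛ R y).left j) ⊗ₜ ((ℛ R x).right i * (ℛ R y).right j) := by
  simp only [sigmaOf, LinearMap.comp_apply, LinearEquiv.coe_coe, map_tmul,
    comul_repr' x, comul_repr' y, sum_tmul, tmul_sum, map_sum,
    tensorTensorTensorComm_tmul, LinearMap.mul'_apply]
  exact Finset.sum_comm

open Coalgebra in
lemma psi_tmul (φ : H ⊗[R] A →ₗ[R] A) (x : H) (a : A) :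
    psiOf φ (x ⊗ₜ a) = ∑ i ∈ (ℛ R x).index,
      φ ((ℛ R x).left i ⊗ₜ a) ⊗ₜ (ℛ R x).right i := by
  simp only [psiOf, LinearMap.comp_apply, LinearEquiv.coe_coe, LinearMap.rTensor_tmul,
    comul_repr' x, sum_tmul, map_sum, assoc_tmul, LinearMap.lTensor_tmul, comm_tmul,
    assoc_symm_tmul]

open Coalgebra in
lemma sigma_mul_tmul (ω : H ⊗[R] H →ₗ[R] A) (x y z : H) :
    sigmaOf ω ((x * y) ⊗ₜ z) = ∑ i ∈ (ℛ R x).index, ∑ j ∈ (ℛ R y).index,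
      ∑ k ∈ (ℛ R z).index,
      ω (((ℛ R x).left i * (ℛ R y).left j) ⊗ₜ (ℛ R z).left k)
        ⊗ₜ (((ℛ R x).right i * (ℛ R y).right j) * (ℛ R z).right k) := by
  simp only [sigmaOf, LinearMap.comp_apply, LinearEquiv.coe_coe, map_tmul,
    Bialgebra.comul_mul]
  simp only [comul_repr' x, comul_repr' y, comul_repr' z, Finset.sum_mul_sum,
    Algebra.TensorProduct.tmul_mul_tmul, sum_tmul, tmul_sum, map_sum,
    tensorTensorTensorComm_tmul, LinearMap.mul'_apply]
  rw [Finset.sum_comm]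
  exact Finset.sum_congr rfl fun i _ => Finset.sum_comm

open Coalgebra in
lemma sigma_tmul_mul (ω : H ⊗[R] H →ₗ[R] A) (x y z : H) :
    sigmaOf ω (x ⊗ₜ (y * z)) = ∑ i ∈ (ℛ R x).index, ∑ j ∈ (ℛ R y).index,
      ∑ k ∈ (ℛ R z).index,
      ω ((ℛ R x).left i ⊗ₜ ((ℛ R y).left j * (ℛ R z).left k))
        ⊗ₜ ((ℛ R x).right i * ((ℛ R y).right j * (ℛ R z).right k)) := by
  simp only [sigmaOf, LinearMap.comp_apply, LinearEquiv.coe_coe, map_tmul,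
    Bialgebra.comul_mul]
  simp only [comul_repr' x, comul_repr' y, comul_repr' z, Finset.sum_mul_sum,
    Algebra.TensorProduct.tmul_mul_tmul, sum_tmul, tmul_sum, map_sum,
    tensorTensorTensorComm_tmul, LinearMap.mul'_apply]
  exact (Finset.sum_congr rfl fun _ _ => Finset.sum_comm).trans Finset.sum_comm

/-- Comultiplication on `(H ⊗ H) ⊗ H` viewed as tensor product of coalgebras. -/
noncomputable def DT : (H ⊗[R] H) ⊗[R] H →ₗ[R]
    ((H ⊗[R] H) ⊗[R] H) ⊗[R] ((H ⊗[R] H) ⊗[R] H) :=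
  (TensorProduct.tensorTensorTensorComm R (H ⊗[R] H) (H ⊗[R] H) H H).toLinearMap
    ∘ₗ TensorProduct.map
      ((TensorProduct.tensorTensorTensorComm R H H H H).toLinearMap
        ∘ₗ TensorProduct.map (Coalgebra.comul : H →ₗ[R] H ⊗[R] H) Coalgebra.comul)
      (Coalgebra.comul : H →ₗ[R] H ⊗[R] H)

/-- Triple multiplication `(H ⊗ H) ⊗ H → H`. -/
noncomputable def m3 : (H ⊗[R] H) ⊗[R] H →ₗ[R] H :=
  LinearMap.mul' R H ∘ₗ LinearMap.rTensor H (LinearMap.mul' R H)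

/-- Left-nested double comultiplication. -/
noncomputable def Dl : H →ₗ[R] (H ⊗[R] H) ⊗[R] H :=
  LinearMap.rTensor H (Coalgebra.comul : H →ₗ[R] H ⊗[R] H) ∘ₗ Coalgebra.comul

/-- Right-nested double comultiplication. -/
noncomputable def Dr : H →ₗ[R] H ⊗[R] (H ⊗[R] H) :=
  LinearMap.lTensor H (Coalgebra.comul : H →ₗ[R] H ⊗[R] H) ∘ₗ Coalgebra.comul

lemma Dr_eq_assoc_Dl : (Dr : H →ₗ[R] _) =
    (TensorProduct.assoc R H H H).toLinearMap ∘ₗ Dl := by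
  rw [Dr, Dl, ← LinearMap.comp_assoc]
  exact Coalgebra.coassoc.symm

/-- counit contraction `A ⊗ H → A`. -/
noncomputable def EC : A ⊗[R] H →ₗ[R] A :=
  (TensorProduct.rid R A).toLinearMap ∘ₗ LinearMap.lTensor A (Coalgebra.counit : H →ₗ[R] R)

open Coalgebra in
lemma DT_tmul (h g l : H) : DT (R := R) (H := H) ((h ⊗ₜ g) ⊗ₜ l) =
    ∑ k ∈ (ℛ R l).index, ∑ j ∈ (ℛ R g).index, ∑ i ∈ (ℛ R h).index,
      (((ℛ R h).left i ⊗ₜ (ℛ R g).left j) ⊗ₜ (ℛ R l).left k) ⊗ₜ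
        (((ℛ R h).right i ⊗ₜ (ℛ R g).right j) ⊗ₜ (ℛ R l).right k) := by
  simp only [DT, LinearMap.comp_apply, LinearEquiv.coe_coe, map_tmul,
    comul_repr' h, comul_repr' g, comul_repr' l, sum_tmul, tmul_sum, map_sum,
    tensorTensorTensorComm_tmul]

open Coalgebra in
lemma Dl_apply (h : H) : Dl (R := R) h =
    ∑ i ∈ (ℛ R h).index, ∑ p ∈ (ℛ R ((ℛ R h).left i)).index,
      ((ℛ R ((ℛ R h).left i)).left p ⊗ₜ (ℛ R ((ℛ R h).left i)).right p)
        ⊗ₜ (ℛ R h).right i := by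
  simp only [Dl, LinearMap.comp_apply, comul_repr' h, map_sum, LinearMap.rTensor_tmul,
    comul_repr', sum_tmul]

open Coalgebra in
lemma Dr_apply (h : H) : Dr (R := R) h =
    ∑ i ∈ (ℛ R h).index, ∑ p ∈ (ℛ R ((ℛ R h).right i)).index,
      (ℛ R h).left i ⊗ₜ
        ((ℛ R ((ℛ R h).right i)).left p ⊗ₜ (ℛ R ((ℛ R h).right i)).right p) := by
  simp only [Dr, LinearMap.comp_apply, comul_repr' h, map_sum, LinearMap.lTensor_tmul,
    comul_repr', tmul_sum]

/-- collecting map `(H ⊗ (H ⊗ H)) ⊗ (H ⊗ (H ⊗ H)) → (H ⊗ H) ⊗ ((H ⊗ H) ⊗ (H ⊗ H))`. -/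
noncomputable def step1 : (H ⊗[R] (H ⊗[R] H)) ⊗[R] (H ⊗[R] (H ⊗[R] H)) →ₗ[R]
    (H ⊗[R] H) ⊗[R] ((H ⊗[R] H) ⊗[R] (H ⊗[R] H)) :=
  LinearMap.lTensor (H ⊗[R] H) (TensorProduct.tensorTensorTensorComm R H H H H).toLinearMap
    ∘ₗ (TensorProduct.tensorTensorTensorComm R H (H ⊗[R] H) H (H ⊗[R] H)).toLinearMap

/-- `step2 ω ((x₁ ⊗ (x₂ ⊗ x₃)) ⊗ (y₁ ⊗ (y₂ ⊗ y₃))) = ω (x₁ ⊗ y₁) ⊗ (x₂y₂ ⊗ x₃y₃)`. -/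
noncomputable def step2 (ω : H ⊗[R] H →ₗ[R] A) :
    (H ⊗[R] (H ⊗[R] H)) ⊗[R] (H ⊗[R] (H ⊗[R] H)) →ₗ[R] A ⊗[R] (H ⊗[R] H) :=
  TensorProduct.map ω (TensorProduct.map (LinearMap.mul' R H) (LinearMap.mul' R H)) ∘ₗ step1

lemma step2_tmul (ω : H ⊗[R] H →ₗ[R] A) (x₁ x₂ x₃ y₁ y₂ y₃ : H) :
    step2 ω ((x₁ ⊗ₜ (x₂ ⊗ₜ x₃)) ⊗ₜ (y₁ ⊗ₜ (y₂ ⊗ₜ y₃))) =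
      ω (x₁ ⊗ₜ y₁) ⊗ₜ ((x₂ * y₂) ⊗ₜ (x₃ * y₃)) := by
  simp only [step2, step1, LinearMap.comp_apply, LinearEquiv.coe_coe,
    tensorTensorTensorComm_tmul, LinearMap.lTensor_tmul, map_tmul, LinearMap.mul'_apply]

/-- normal form target for the cocycle LHS. -/
noncomputable def FF3 (ω : H ⊗[R] H →ₗ[R] A) :
    ((H ⊗[R] (H ⊗[R] H)) ⊗[R] (H ⊗[R] (H ⊗[R] H))) ⊗[R] (H ⊗[R] H) →ₗ[R] A ⊗[R] H :=
  TensorProduct.map (LinearMap.mul' R A) LinearMap.id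
    ∘ₗ (TensorProduct.assoc R A A H).symm.toLinearMap
    ∘ₗ LinearMap.lTensor A (TensorProduct.map ω (LinearMap.mul' R H))
    ∘ₗ LinearMap.lTensor A (TensorProduct.tensorTensorTensorComm R H H H H).toLinearMap
    ∘ₗ (TensorProduct.assoc R A (H ⊗[R] H) (H ⊗[R] H)).toLinearMap
    ∘ₗ LinearMap.rTensor (H ⊗[R] H) (step2 ω)

lemma FF3_tmul (ω : H ⊗[R] H →ₗ[R] A) (x₁ x₂ x₃ y₁ y₂ y₃ l₁ l₂ : H) :
    FF3 ω (((x₁ ⊗ₜ (x₂ ⊗ₜ x₃)) ⊗ₜ (y₁ ⊗ₜ (y₂ ⊗ₜ y₃))) ⊗ₜ (l₁ ⊗ₜ l₂)) =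
      (ω (x₁ ⊗ₜ y₁) * ω ((x₂ * y₂) ⊗ₜ l₁)) ⊗ₜ ((x₃ * y₃) * l₂) := by
  simp only [FF3, LinearMap.comp_apply, LinearEquiv.coe_coe, LinearMap.rTensor_tmul,
    step2_tmul, assoc_tmul, LinearMap.lTensor_tmul, tensorTensorTensorComm_tmul,
    map_tmul, LinearMap.mul'_apply, assoc_symm_tmul, LinearMap.id_coe, id_eq]

set_option synthInstance.maxHeartbeats 1000000
set_option maxHeartbeats 4000000
open Coalgebra in
lemma F1 (ω : H ⊗[R] H →ₗ[R] A) :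
    cocycleLHS (sigmaOf ω) = FF3 ω ∘ₗ
      TensorProduct.map (TensorProduct.map (Dr (R := R)) Dr) Coalgebra.comul := by
  ext h g l
  simp only [AlgebraTensorModule.curry_apply, curry_apply, LinearMap.coe_restrictScalars,
    LinearMap.comp_apply, LinearEquiv.coe_coe, cocycleLHS, LinearMap.rTensor_tmul]
  rw [sigma_tmul]
  simp only [sum_tmul, map_sum, assoc_tmul, LinearMap.lTensor_tmul]
  simp only [sigma_mul_tmul]
  simp only [tmul_sum, map_sum, assoc_symm_tmul, map_tmul, LinearMap.mul'_apply,
    LinearMap.id_coe, id_eq]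
  rw [Dr_apply h, Dr_apply g, comul_repr' l]
  simp only [sum_tmul, tmul_sum, map_sum, FF3_tmul]
  exact sum_five _ _ _ _ _ _

open Coalgebra in
lemma F3 (ω : H ⊗[R] H →ₗ[R] A) :
    TensorProduct.map (partialCocycleRHS ω) (m3 (R := R)) ∘ₗ DT = FF3 ω ∘ₗ
      TensorProduct.map (TensorProduct.map
          ((TensorProduct.assoc R H H H).toLinearMap ∘ₗ Dl)
          ((TensorProduct.assoc R H H H).toLinearMap ∘ₗ Dl))
        Coalgebra.comul := by
  ext h g l
  simp only [AlgebraTensorModule.curry_apply, curry_apply, LinearMap.coe_restrictScalars,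
    LinearMap.comp_apply, LinearEquiv.coe_coe]
  rw [DT_tmul]
  simp only [map_sum, map_tmul, m3, LinearMap.comp_apply, LinearMap.rTensor_tmul,
    LinearMap.mul'_apply]
  simp only [partialCocycleRHS, LinearMap.comp_apply, LinearEquiv.coe_coe,
    LinearMap.rTensor_tmul]
  simp only [sigma_tmul, sum_tmul, map_sum, assoc_tmul, LinearMap.lTensor_tmul,
    LinearMap.mul'_apply]
  rw [Dl_apply h, Dl_apply g, comul_repr' l]
  simp only [map_sum, LinearEquiv.coe_coe, assoc_tmul, sum_tmul, tmul_sum, FF3_tmul]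
  exact Finset.sum_congr rfl fun k _ => Finset.sum_congr rfl fun j _ =>
    (Finset.sum_congr rfl fun i _ => Finset.sum_comm).trans Finset.sum_comm

/-- normal form target for the cocycle RHS. -/
noncomputable def FF4 (φ : H ⊗[R] A →ₗ[R] A) (ω : H ⊗[R] H →ₗ[R] A) :
    ((H ⊗[R] (H ⊗[R] H)) ⊗[R] (H ⊗[R] (H ⊗[R] H))) ⊗[R] (H ⊗[R] (H ⊗[R] H))
      →ₗ[R] A ⊗[R] H :=
  TensorProduct.map (LinearMap.mul' R A) LinearMap.id
    ∘ₗ (TensorProduct.assoc R A A H).symm.toLinearMap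
    ∘ₗ TensorProduct.map φ (TensorProduct.map ω (LinearMap.mul' R H)
        ∘ₗ (TensorProduct.tensorTensorTensorComm R H H H H).toLinearMap)
    ∘ₗ (TensorProduct.tensorTensorTensorComm R H (H ⊗[R] H) A (H ⊗[R] H)).toLinearMap
    ∘ₗ LinearMap.lTensor (H ⊗[R] (H ⊗[R] H)) (step2 ω)
    ∘ₗ (TensorProduct.assoc R (H ⊗[R] (H ⊗[R] H)) (H ⊗[R] (H ⊗[R] H))
        (H ⊗[R] (H ⊗[R] H))).toLinearMap

lemma FF4_tmul (φ : H ⊗[R] A →ₗ[R] A) (ω : H ⊗[R] H →ₗ[R] A)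
    (x₁ x₂ x₃ y₁ y₂ y₃ z₁ z₂ z₃ : H) :
    FF4 φ ω (((x₁ ⊗ₜ (x₂ ⊗ₜ x₃)) ⊗ₜ (y₁ ⊗ₜ (y₂ ⊗ₜ y₃))) ⊗ₜ (z₁ ⊗ₜ (z₂ ⊗ₜ z₃))) =
      (φ (x₁ ⊗ₜ ω (y₁ ⊗ₜ z₁)) * ω (x₂ ⊗ₜ (y₂ * z₂))) ⊗ₜ (x₃ * (y₃ * z₃)) := by
  simp only [FF4, LinearMap.comp_apply, LinearEquiv.coe_coe, assoc_tmul,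
    LinearMap.lTensor_tmul, step2_tmul, tensorTensorTensorComm_tmul, map_tmul,
    LinearMap.mul'_apply, assoc_symm_tmul, LinearMap.id_coe, id_eq]

open Coalgebra in
lemma F2 (φ : H ⊗[R] A →ₗ[R] A) (ω : H ⊗[R] H →ₗ[R] A) :
    cocycleRHS (psiOf φ) (sigmaOf ω) ∘ₗ (TensorProduct.assoc R H H H).toLinearMap
      = FF4 φ ω ∘ₗ TensorProduct.map
          (TensorProduct.map (Dr (R := R)) Dr) Dr := by
  ext h g l
  simp only [AlgebraTensorModule.curry_apply, curry_apply, LinearMap.coe_restrictScalars,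
    LinearMap.comp_apply, LinearEquiv.coe_coe, cocycleRHS, assoc_tmul,
    LinearMap.lTensor_tmul]
  rw [sigma_tmul]
  simp only [tmul_sum, map_sum, assoc_symm_tmul, LinearMap.rTensor_tmul]
  simp only [psi_tmul]
  simp only [sum_tmul, map_sum, assoc_tmul, LinearMap.lTensor_tmul]
  simp only [sigma_tmul_mul]
  simp only [tmul_sum, map_sum, assoc_symm_tmul, map_tmul, LinearMap.mul'_apply,
    LinearMap.id_coe, id_eq]
  rw [Dr_apply h, Dr_apply g, Dr_apply l]
  simp only [sum_tmul, tmul_sum, map_sum, FF4_tmul]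
  exact sum_six _ _ _ _ _ _ _

section SumSix2
variable {M α β γ : Type*} {α' : α → Type*} {β' : β → Type*} {γ' : γ → Type*}
  [AddCommMonoid M]

lemma sum_six' (s : Finset α) (t : Finset β) (u : Finset γ)
    (s' : (a : α) → Finset (α' a)) (t' : (b : β) → Finset (β' b))
    (u' : (c : γ) → Finset (γ' c))
    (f : (a : α) → (b : β) → (c : γ) → α' a → β' b → γ' c → M) :
    ∑ c ∈ u, ∑ b ∈ t, ∑ a ∈ s, ∑ y ∈ t' b, ∑ z ∈ u' c, ∑ x ∈ s' a, f a b c x y z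
      = ∑ c ∈ u, ∑ z ∈ u' c, ∑ b ∈ t, ∑ y ∈ t' b, ∑ a ∈ s, ∑ x ∈ s' a,
          f a b c x y z := by
  refine (c1 fun c _ => c1 fun b _ => c1 fun a _ => Finset.sum_comm).trans ?_
    -- c b a z y x
  refine (c1 fun c _ => c1 fun b _ => Finset.sum_comm).trans ?_
    -- c b z a y x
  refine (c1 fun c _ => Finset.sum_comm).trans ?_
    -- c z b a y x
  exact c1 fun c _ => c1 fun z _ => c1 fun b _ => Finset.sum_comm
    -- c z b y a x
end SumSix2

open Coalgebra in
lemma F4 (φ : H ⊗[R] A →ₗ[R] A) (ω : H ⊗[R] H →ₗ[R] A) :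
    TensorProduct.map
        (partialCocycleLHS φ ω ∘ₗ (TensorProduct.assoc R H H H).toLinearMap)
        (m3 (R := R)) ∘ₗ DT
      = FF4 φ ω ∘ₗ TensorProduct.map
          (TensorProduct.map
            ((TensorProduct.assoc R H H H).toLinearMap ∘ₗ Dl)
            ((TensorProduct.assoc R H H H).toLinearMap ∘ₗ Dl))
          ((TensorProduct.assoc R H H H).toLinearMap ∘ₗ Dl) := by
  ext h g l
  simp only [AlgebraTensorModule.curry_apply, curry_apply, LinearMap.coe_restrictScalars,
    LinearMap.comp_apply, LinearEquiv.coe_coe]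
  rw [DT_tmul]
  simp only [map_sum, map_tmul, m3, LinearMap.comp_apply, LinearMap.rTensor_tmul,
    LinearMap.mul'_apply, LinearEquiv.coe_coe, assoc_tmul]
  simp only [partialCocycleLHS, LinearMap.comp_apply, LinearEquiv.coe_coe,
    LinearMap.lTensor_tmul]
  simp only [sigma_tmul]
  simp only [tmul_sum, map_sum, assoc_symm_tmul, LinearMap.rTensor_tmul]
  simp only [psi_tmul]
  simp only [sum_tmul, map_sum, assoc_tmul, LinearMap.lTensor_tmul, LinearMap.mul'_apply]
  rw [Dl_apply h, Dl_apply g, Dl_apply l]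
  simp only [map_sum, LinearEquiv.coe_coe, assoc_tmul, sum_tmul, tmul_sum, FF4_tmul,
    mul_assoc]
  exact sum_six' _ _ _ _ _ _ _

open Coalgebra in
lemma counit_contract (h : H) :
    ∑ i ∈ (ℛ R h).index, Coalgebra.counit (R := R) ((ℛ R h).right i) • (ℛ R h).left i
      = h := by
  have h1 := Coalgebra.sum_tmul_counit_eq (ℛ R h)
  apply_fun (TensorProduct.rid R H) at h1
  simp only [map_sum, TensorProduct.rid_tmul, one_smul] at h1
  exact h1

open Coalgebra in
lemma EC_cancel (f : (H ⊗[R] H) ⊗[R] H →ₗ[R] A) :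
    EC ∘ₗ (TensorProduct.map f (m3 (R := R)) ∘ₗ DT) = f := by
  ext h g l
  simp only [AlgebraTensorModule.curry_apply, curry_apply, LinearMap.coe_restrictScalars,
    LinearMap.comp_apply]
  rw [DT_tmul]
  simp only [map_sum, map_tmul, m3, LinearMap.comp_apply, LinearMap.rTensor_tmul,
    LinearMap.mul'_apply, EC, LinearMap.lTensor_tmul, LinearEquiv.coe_coe,
    TensorProduct.rid_tmul, Bialgebra.counit_mul]
  conv_rhs => rw [← counit_contract (R := R) h, ← counit_contract (R := R) g, ← counit_contract (R := R) l]
  simp only [sum_tmul, tmul_sum, map_sum, smul_tmul, tmul_smul, map_smul,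
    Finset.smul_sum, smul_smul]
  refine Finset.sum_congr rfl fun k _ => Finset.sum_congr rfl fun j _ =>
    Finset.sum_congr rfl fun i _ => ?_
  congr 1
  ring

lemma L3 (ω : H ⊗[R] H →ₗ[R] A) :
    cocycleLHS (sigmaOf ω)
      = TensorProduct.map (partialCocycleRHS ω) (m3 (R := R)) ∘ₗ DT := by
  rw [F1, Dr_eq_assoc_Dl]
  exact (F3 ω).symm

lemma L4 (φ : H ⊗[R] A →ₗ[R] A) (ω : H ⊗[R] H →ₗ[R] A) :
    cocycleRHS (psiOf φ) (sigmaOf ω) ∘ₗ (TensorProduct.assoc R H H H).toLinearMap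
      = TensorProduct.map
          (partialCocycleLHS φ ω ∘ₗ (TensorProduct.assoc R H H H).toLinearMap)
          (m3 (R := R)) ∘ₗ DT := by
  rw [F2, Dr_eq_assoc_Dl]
  exact (F4 φ ω).symm
/-- The partial cocycle condition holds iff the weak crossed product cocycle
condition holds for ψ and σ built from φ and ω. -/
theorem partialCocycle_iff_cocycle (φ : H ⊗[R] A →ₗ[R] A)
    (ω : H ⊗[R] H →ₗ[R] A) :
    (partialCocycleLHS φ ω ∘ₗ (TensorProduct.assoc R H H H).toLinearMap =
        partialCocycleRHS ω) ↔
      (cocycleLHS (sigmaOf ω) =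
        cocycleRHS (psiOf φ) (sigmaOf ω)
          ∘ₗ (TensorProduct.assoc R H H H).toLinearMap) := by
  constructor
  · intro hEq
    rw [L3, L4, hEq]
  · intro hEq
    calc partialCocycleLHS φ ω ∘ₗ (TensorProduct.assoc R H H H).toLinearMap
        = EC ∘ₗ (TensorProduct.map
            (partialCocycleLHS φ ω ∘ₗ (TensorProduct.assoc R H H H).toLinearMap)
            (m3 (R := R)) ∘ₗ DT) := (EC_cancel _).symm
      _ = EC ∘ₗ (cocycleRHS (psiOf φ) (sigmaOf ω)
            ∘ₗ (TensorProduct.assoc R H H H).toLinearMap) := by rw [L4]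
      _ = EC ∘ₗ cocycleLHS (sigmaOf ω) := by rw [hEq]
      _ = EC ∘ₗ (TensorProduct.map (partialCocycleRHS ω) (m3 (R := R)) ∘ₗ DT) := by
            rw [L3]
      _ = partialCocycleRHS ω := EC_cancel _
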